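/- Let n ≥ 2, k ≥ 1 an integer, and m ≥ 1. Suppose the set G of m goods is partitioned into sets T, S_1,…,S_{k−1}, B with |T| = n−1 and |S_ℓ| ≤ m^{(2ℓ−1)/(2k−1)} for every ℓ ∈ {1,…,k−1}. Let u : G → ℝ be given by u(g) = √k for g ∈ T, u(g) = m^{−2ℓ/(2k−1)} for g ∈ S_ℓ, and u(g) = 0 for g ∈ B, and suppose every agent has the additive valuation u. Let X be an allocation such that X_n ∩ T = ∅ and such that there exist an agent i ≠ n and a good g* ∈ T ∩ X_i with |X_i| ≥ 2. Then X is not α-EFX for any α > √k · m^{−1/(2k−1)}. -/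

import Mathlib

/-- In the lower-bound instance where the goods are partitioned into
`T, S_1, …, S_{k-1}, B` with `|T| = n-1`, `|S_ℓ| ≤ m^((2ℓ-1)/(2k-1))`, and every agent
has the additive valuation `u` (value `√k` on `T`, `m^(-2ℓ/(2k-1))` on `S_ℓ`, `0` on
`B`): if in the allocation `X` agent `n` gets no good from `T`, and some other agent `i`
gets a good of `T` and at least two goods, then `X` is not `α`-EFX for any
`α > √k · m^(-1/(2k-1))`. -/
theorem stmt_5 (n k m : ℕ) (hn : 2 ≤ n) (hk : 1 ≤ k) (hm : 1 ≤ m)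
    (T B : Finset (Fin m)) (S : ℕ → Finset (Fin m))
    (hTcard : T.card = n - 1)
    (hScard : ∀ ℓ : ℕ, 1 ≤ ℓ → ℓ ≤ k - 1 →
      ((S ℓ).card : ℝ) ≤ (m : ℝ) ^ ((2 * (ℓ : ℝ) - 1) / (2 * (k : ℝ) - 1)))
    (hcoverG : ∀ g : Fin m, g ∈ T ∨ g ∈ B ∨ ∃ ℓ : ℕ, 1 ≤ ℓ ∧ ℓ ≤ k - 1 ∧ g ∈ S ℓ)
    (hTB : Disjoint T B)
    (hTS : ∀ ℓ : ℕ, 1 ≤ ℓ → ℓ ≤ k - 1 → Disjoint T (S ℓ))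
    (hBS : ∀ ℓ : ℕ, 1 ≤ ℓ → ℓ ≤ k - 1 → Disjoint B (S ℓ))
    (hSS : ∀ ℓ ℓ' : ℕ, 1 ≤ ℓ → ℓ ≤ k - 1 → 1 ≤ ℓ' → ℓ' ≤ k - 1 → ℓ ≠ ℓ' →
      Disjoint (S ℓ) (S ℓ'))
    (u : Fin m → ℝ)
    (huT : ∀ g ∈ T, u g = Real.sqrt k)
    (huS : ∀ ℓ : ℕ, 1 ≤ ℓ → ℓ ≤ k - 1 → ∀ g ∈ S ℓ,
      u g = (m : ℝ) ^ (-(2 * (ℓ : ℝ)) / (2 * (k : ℝ) - 1)))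
    (huB : ∀ g ∈ B, u g = 0)
    (X : Fin n → Finset (Fin m))
    (hdisj : ∀ i j : Fin n, i ≠ j → Disjoint (X i) (X j))
    (hcover : ∀ g : Fin m, ∃ i : Fin n, g ∈ X i)
    (hXn : X ⟨n - 1, by omega⟩ ∩ T = ∅)
    (i : Fin n) (hi : i ≠ ⟨n - 1, by omega⟩)
    (gstar : Fin m) (hgstar : gstar ∈ T ∩ X i) (hXi : 2 ≤ (X i).card) :
    ∀ α : ℝ, Real.sqrt k * (m : ℝ) ^ (-(1 : ℝ) / (2 * (k : ℝ) - 1)) < α →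
      ¬ (∀ i' j : Fin n, X j ≠ ∅ → ∀ g ∈ X j,
          α * ((X j).erase g).sum u ≤ (X i').sum u) := by
  intro α hα hEFX
  set N : Fin n := ⟨n - 1, by omega⟩ with hNdef
  have hmpos : (0:ℝ) < m := by exact_mod_cast hm
  have hkpos : (1:ℝ) ≤ (k:ℝ) := by exact_mod_cast hk
  set D : ℝ := 2 * (k:ℝ) - 1 with hDdef
  have hsqrtpos : 0 < Real.sqrt k := Real.sqrt_pos.mpr (by linarith)
  have hrpos : 0 < (m:ℝ) ^ (-(1:ℝ) / D) := Real.rpow_pos_of_pos hmpos _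
  have hαpos : 0 < α := lt_trans (mul_pos hsqrtpos hrpos) hα
  have hu0 : ∀ g, 0 ≤ u g := by
    intro g
    rcases hcoverG g with h | h | ⟨ℓ, h1, h2, h3⟩
    · rw [huT g h]; exact Real.sqrt_nonneg _
    · rw [huB g h]
    · rw [huS ℓ h1 h2 g h3]; positivity
  rw [Finset.mem_inter] at hgstar
  obtain ⟨hgT, hgXi⟩ := hgstar
  have hone : 1 < (X i).card := by omega
  obtain ⟨g', hg'Xi, hg'ne⟩ := Finset.exists_mem_ne hone gstar
  have hXine : X i ≠ ∅ := by
    intro h; rw [h] at hgXi; simp at hgXi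
  have hEF := hEFX N i hXine g' hg'Xi
  -- lower bound on erased sum
  have hlow : Real.sqrt k ≤ ((X i).erase g').sum u := by
    have hmem : gstar ∈ (X i).erase g' :=
      Finset.mem_erase.mpr ⟨(Ne.symm hg'ne), hgXi⟩
    calc Real.sqrt k = u gstar := (huT _ hgT).symm
      _ ≤ _ := Finset.single_le_sum (fun g _ => hu0 g) hmem
  -- upper bound on agent N's value
  have hXN_T : ∀ g ∈ X N, g ∉ T := by
    intro g hg hgT'
    have : g ∈ X N ∩ T := Finset.mem_inter.mpr ⟨hg, hgT'⟩
    rw [hXn] at this; simp at this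
  set U : Finset (Fin m) := (Finset.Icc 1 (k-1)).biUnion S with hUdef
  have hUsum : ((X N).sum u) ≤ U.sum u := by
    have heq : ((X N) ∩ U).sum u = (X N).sum u := by
      apply Finset.sum_subset Finset.inter_subset_left
      intro g hg hg2
      rcases hcoverG g with h | h | ⟨ℓ, h1, h2, h3⟩
      · exact absurd h (hXN_T g hg)
      · exact huB g h
      · exact absurd (Finset.mem_inter.mpr ⟨hg,
          Finset.mem_biUnion.mpr ⟨ℓ, Finset.mem_Icc.mpr ⟨h1, h2⟩, h3⟩⟩) hg2
    rw [← heq]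
    exact Finset.sum_le_sum_of_subset_of_nonneg Finset.inter_subset_right
      (fun g _ _ => hu0 g)
  have hUsum2 : U.sum u ≤ ((k:ℝ) - 1) * (m:ℝ) ^ (-(1:ℝ)/D) := by
    rw [hUdef, Finset.sum_biUnion (by
      intro a ha b hb hab
      obtain ⟨ha1, ha2⟩ := Finset.mem_Icc.mp ha
      obtain ⟨hb1, hb2⟩ := Finset.mem_Icc.mp hb
      exact hSS a b ha1 ha2 hb1 hb2 hab)]
    have hbound : ∀ ℓ ∈ Finset.Icc 1 (k-1), (S ℓ).sum u ≤ (m:ℝ) ^ (-(1:ℝ)/D) := by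
      intro ℓ hℓ
      obtain ⟨h1, h2⟩ := Finset.mem_Icc.mp hℓ
      have hS : (S ℓ).sum u = ((S ℓ).card : ℝ) * (m:ℝ) ^ (-(2*(ℓ:ℝ))/D) := by
        rw [Finset.sum_congr rfl (huS ℓ h1 h2), Finset.sum_const, nsmul_eq_mul]
      rw [hS]
      calc ((S ℓ).card : ℝ) * (m:ℝ) ^ (-(2*(ℓ:ℝ))/D)
          ≤ (m:ℝ) ^ ((2*(ℓ:ℝ)-1)/D) * (m:ℝ) ^ (-(2*(ℓ:ℝ))/D) :=
            mul_le_mul_of_nonneg_right (hScard ℓ h1 h2) (Real.rpow_nonneg hmpos.le _)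
        _ = (m:ℝ) ^ ((2*(ℓ:ℝ)-1)/D + (-(2*(ℓ:ℝ)))/D) := (Real.rpow_add hmpos _ _).symm
        _ = (m:ℝ) ^ (-(1:ℝ)/D) := by rw [← add_div]; ring_nf
    calc ∑ ℓ ∈ Finset.Icc 1 (k-1), (S ℓ).sum u
        ≤ ∑ ℓ ∈ Finset.Icc 1 (k-1), (m:ℝ) ^ (-(1:ℝ)/D) := Finset.sum_le_sum hbound
      _ = ((k-1 : ℕ) : ℝ) * (m:ℝ) ^ (-(1:ℝ)/D) := by
          rw [Finset.sum_const, nsmul_eq_mul, Nat.card_Icc]; norm_num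
      _ ≤ ((k:ℝ) - 1) * (m:ℝ) ^ (-(1:ℝ)/D) := by
          apply mul_le_mul_of_nonneg_right _ hrpos.le
          push_cast [Nat.cast_sub hk]
          exact le_refl _
  have key : α * Real.sqrt k ≤ ((k:ℝ) - 1) * (m:ℝ) ^ (-(1:ℝ)/D) := by
    calc α * Real.sqrt k ≤ α * ((X i).erase g').sum u :=
          mul_le_mul_of_nonneg_left hlow hαpos.le
      _ ≤ (X N).sum u := hEF
      _ ≤ U.sum u := hUsum
      _ ≤ _ := hUsum2
  have hcontr : (k:ℝ) * (m:ℝ) ^ (-(1:ℝ)/D) < α * Real.sqrt k := by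
    have := mul_lt_mul_of_pos_right hα hsqrtpos
    have hsq : Real.sqrt k * Real.sqrt k = (k:ℝ) :=
      Real.mul_self_sqrt (by linarith)
    nlinarith [hrpos]
  nlinarith [hrpos]
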